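/- Let W be a discrete memoryless channel with R_cr < C, Q ∈ P(𝒳) with E_r(R,Q) > 0 for some R > R_∞, and fix r ∈ (R_cr(Q), I(Q;W)). Put ρ := −∂E_r(a,Q)/∂a|_{a=r} ∈ (0,1) and ṽ := ( (1−ρ)/(1+ρ), 1/(1+ρ) ). Then the gradient of Λ_{1,ρ} at ṽ equals ( −Λ'_ρ(ρ/(1+ρ)), 0 ), i.e., ∂Λ_{1,ρ}(v₁,ṽ₂)/∂v₁|_{v₁=ṽ₁} = −Λ'_ρ(ρ/(1+ρ)) and ∂Λ_{1,ρ}(ṽ₁,v₂)/∂v₂|_{v₂=ṽ₂} = 0. -/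

import Mathlib

open Real BigOperators
open scoped Classical

namespace RCB

/-- A probability distribution on a finite alphabet. -/
def IsDist {α : Type*} [Fintype α] (Q : α → ℝ) : Prop :=
  (∀ a, 0 ≤ Q a) ∧ ∑ a, Q a = 1

/-- A discrete memoryless channel, i.e. a stochastic matrix from `X` to `Y`. -/
def IsChannel {X Y : Type*} [Fintype X] [Fintype Y] (W : X → Y → ℝ) : Prop :=
  (∀ x y, 0 ≤ W x y) ∧ ∀ x, ∑ y, W x y = 1

/-- The Gallager function `E_o(ρ, Q)`. -/
noncomputable def Eo {X Y : Type*} [Fintype X] [Fintype Y]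
    (W : X → Y → ℝ) (ρ : ℝ) (Q : X → ℝ) : ℝ :=
  - Real.log (∑ y, (∑ x, Q x * W x y ^ (1 / (1 + ρ))) ^ (1 + ρ))

/-- The random coding exponent `E_r(R, Q)` for input distribution `Q`. -/
noncomputable def ErQ {X Y : Type*} [Fintype X] [Fintype Y]
    (W : X → Y → ℝ) (R : ℝ) (Q : X → ℝ) : ℝ :=
  sSup ((fun ρ => -ρ * R + Eo W ρ Q) '' Set.Icc (0 : ℝ) 1)

/-- The random coding exponent `E_r(R)`. -/
noncomputable def Er {X Y : Type*} [Fintype X] [Fintype Y]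
    (W : X → Y → ℝ) (R : ℝ) : ℝ :=
  sSup {v : ℝ | ∃ Q : X → ℝ, IsDist Q ∧ v = ErQ W R Q}

/-- The mutual information `I(Q; W)` (natural logarithm). -/
noncomputable def MI {X Y : Type*} [Fintype X] [Fintype Y]
    (W : X → Y → ℝ) (Q : X → ℝ) : ℝ :=
  ∑ x, ∑ y, Q x * W x y * Real.log (W x y / ∑ x', Q x' * W x' y)

/-- The capacity `C = max_Q I(Q;W)`. -/
noncomputable def Capacity {X Y : Type*} [Fintype X] [Fintype Y]
    (W : X → Y → ℝ) : ℝ :=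
  sSup {v : ℝ | ∃ Q : X → ℝ, IsDist Q ∧ v = MI W Q}

/-- The critical rate of the input distribution `Q`:
`R_cr(Q) = ∂E_o(ρ,Q)/∂ρ |_{ρ=1}`. -/
noncomputable def RcrQ {X Y : Type*} [Fintype X] [Fintype Y]
    (W : X → Y → ℝ) (Q : X → ℝ) : ℝ :=
  deriv (fun ρ => Eo W ρ Q) 1

/-- The critical rate of the channel: the largest `R` with
`E_r(R) = -R + max_Q E_o(1,Q)`. -/
noncomputable def Rcr {X Y : Type*} [Fintype X] [Fintype Y]
    (W : X → Y → ℝ) : ℝ :=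
  sSup {R : ℝ | Er W R = -R + sSup {v : ℝ | ∃ Q : X → ℝ, IsDist Q ∧ v = Eo W 1 Q}}

/-- The rate `R_∞ = inf {R ≥ 0 : E_SP(R) < ∞}` (finiteness of the
sphere-packing exponent expressed as boundedness of the family of affine maps). -/
noncomputable def Rinf {X Y : Type*} [Fintype X] [Fintype Y]
    (W : X → Y → ℝ) : ℝ :=
  sInf {R : ℝ | 0 ≤ R ∧
    BddAbove {v : ℝ | ∃ (Q : X → ℝ) (ρ : ℝ), IsDist Q ∧ 0 ≤ ρ ∧ v = -ρ * R + Eo W ρ Q}}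

/-- The pair `(Q, W)` is singular if `W(y|x) = W(y|z)` whenever
`Q(x)W(y|x)Q(z)W(y|z) > 0`. -/
def Singular {X Y : Type*} (W : X → Y → ℝ) (Q : X → ℝ) : Prop :=
  ∀ x y z, 0 < Q x * W x y * (Q z * W z y) → W x y = W z y

/-- `ρ^*_R(Q) = -∂E_r(a,Q)/∂a |_{a=R}`. -/
noncomputable def rhoStarQ {X Y : Type*} [Fintype X] [Fintype Y]
    (W : X → Y → ℝ) (Q : X → ℝ) (R : ℝ) : ℝ :=
  - deriv (fun a => ErQ W a Q) R

/-- The number of messages of an `(N, R)` code: `⌈exp (N R)⌉`. -/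
noncomputable def nMsgs (N : ℕ) (R : ℝ) : ℕ := ⌈Real.exp (N * R)⌉₊

/-- The `N`-fold memoryless extension of the channel `W`. -/
noncomputable def Wn {X Y : Type*} (W : X → Y → ℝ) {N : ℕ}
    (c : Fin N → X) (y : Fin N → Y) : ℝ :=
  ∏ n, W (c n) (y n)

/-- The maximal error probability of the code `(f, φ)` over the `N`-fold
memoryless extension of `W`. -/
noncomputable def Pmax {X Y : Type*} [Fintype X] [Fintype Y] {M N : ℕ}
    (W : X → Y → ℝ) (f : Fin M → Fin N → X) (φ : (Fin N → Y) → Fin M) : ℝ :=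
  ⨆ m : Fin M, ∑ y : Fin N → Y, Wn W (f m) y * (if φ y ≠ m then (1 : ℝ) else 0)

/-- The ensemble average error probability `P̄_e(Q, N, R)`: the `⌈exp (N R)⌉`
codewords are drawn i.i.d. from `Q^N` and decoded by maximum-likelihood
decoding, ties counted as errors. -/
noncomputable def Pbar {X Y : Type*} [Fintype X] [Fintype Y]
    (W : X → Y → ℝ) (Q : X → ℝ) (N : ℕ) (R : ℝ) : ℝ :=
  ∑ c : Fin (nMsgs N R) → Fin N → X,
    (∏ m, ∏ n, Q (c m n)) *
      ((nMsgs N R : ℝ)⁻¹ *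
        ∑ m, ∑ y : Fin N → Y,
          Wn W (c m) y *
            (if ∃ m', m' ≠ m ∧ Wn W (c m) y ≤ Wn W (c m') y then (1 : ℝ) else 0))

/-- The tilted output distribution `f_ρ`. -/
noncomputable def fRho {X Y : Type*} [Fintype X] [Fintype Y]
    (W : X → Y → ℝ) (Q : X → ℝ) (ρ : ℝ) (y : Y) : ℝ :=
  (∑ x, Q x * W x y ^ (1 / (1 + ρ))) ^ (1 + ρ) /
    ∑ b, (∑ a, Q a * W a b ^ (1 / (1 + ρ))) ^ (1 + ρ)

/-- The cumulant generating function
`Λ_ρ(λ) = log E_{P_{X,Y}}[exp(λ log (f_ρ(Y)/W(Y|X)))]` with `P_{X,Y} = Q × W`. -/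
noncomputable def Lam {X Y : Type*} [Fintype X] [Fintype Y]
    (W : X → Y → ℝ) (Q : X → ℝ) (ρ : ℝ) (t : ℝ) : ℝ :=
  Real.log (∑ x, ∑ y, Q x * W x y * Real.exp (t * Real.log (fRho W Q ρ y / W x y)))

/-- `P_{X,Y,Z}(S̃_Q)` where `P_{X,Y,Z}(x,y,z) = Q(x)W(y|x)Q(z)` and
`S̃_Q = {(x,y,z) : Q(x)W(y|x)Q(z)W(y|z) > 0}`. -/
noncomputable def PStilde {X Y : Type*} [Fintype X] [Fintype Y]
    (W : X → Y → ℝ) (Q : X → ℝ) : ℝ :=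
  ∑ x, ∑ y, ∑ z,
    if 0 < Q x * W x y * (Q z * W z y) then Q x * W x y * Q z else 0

/-- The bivariate cumulant generating function `Λ_{1,ρ}(v)` with respect to the
conditional distribution `P̃_{X,Y,Z}` of `P_{X,Y,Z}` given `S̃_Q`. -/
noncomputable def Lam1 {X Y : Type*} [Fintype X] [Fintype Y]
    (W : X → Y → ℝ) (Q : X → ℝ) (ρ : ℝ) (v : ℝ × ℝ) : ℝ :=
  Real.log ((∑ x, ∑ y, ∑ z,
    if 0 < Q x * W x y * (Q z * W z y) then
      Q x * W x y * Q z *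
        Real.exp (v.1 * Real.log (W x y / fRho W Q ρ y) +
          v.2 * Real.log (W z y / W x y))
    else 0) / PStilde W Q)

/-- The subdifferential of `f : ℝ → ℝ` at `R` (for convex `f`). -/
def Subderiv (f : ℝ → ℝ) (R : ℝ) : Set ℝ :=
  {g : ℝ | ∀ x, f R + g * (x - R) ≤ f x}

/-- The tilted backward channel `P^ρ_{X|Y}`. -/
noncomputable def PXgY {X Y : Type*} [Fintype X]
    (W : X → Y → ℝ) (Q : X → ℝ) (ρ : ℝ) (x : X) (y : Y) : ℝ :=
  Q x * W x y ^ (1 / (1 + ρ)) / ∑ a, Q a * W a y ^ (1 / (1 + ρ))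

/-- The tilted joint distribution `P^ρ_{X,Y}(x,y) = P^ρ_{X|Y}(x|y) P^ρ_Y(y)`. -/
noncomputable def PXY {X Y : Type*} [Fintype X] [Fintype Y]
    (W : X → Y → ℝ) (Q : X → ℝ) (ρ : ℝ) (x : X) (y : Y) : ℝ :=
  PXgY W Q ρ x y * fRho W Q ρ y

private lemma pos_pos {a b : ℝ} (ha : 0 ≤ a) (hb : 0 ≤ b) (h : 0 < a * b) :
    0 < a ∧ 0 < b := by
  rcases ha.eq_or_lt with h1 | h1
  · rw [← h1, zero_mul] at h; exact absurd h (lt_irrefl 0)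
  rcases hb.eq_or_lt with h2 | h2
  · rw [← h2, mul_zero] at h; exact absurd h (lt_irrefl 0)
  exact ⟨h1, h2⟩

lemma grad_main {X Y : Type*} [Fintype X] [Fintype Y]
    (W : X → Y → ℝ) (hW : IsChannel W) (Q : X → ℝ) (hQ : IsDist Q)
    (ρ : ℝ) (hρ0 : 0 ≤ ρ) :
    deriv (fun v₁ => Lam1 W Q ρ (v₁, 1 / (1 + ρ))) ((1 - ρ) / (1 + ρ)) =
        - deriv (fun t => Lam W Q ρ t) (ρ / (1 + ρ)) ∧
      deriv (fun v₂ => Lam1 W Q ρ ((1 - ρ) / (1 + ρ), v₂)) (1 / (1 + ρ)) = 0 := by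
  obtain ⟨hW0, hW1⟩ := hW
  obtain ⟨hQ0, hQ1⟩ := hQ
  have h1 : (0:ℝ) < 1 + ρ := by linarith
  have h1ne : (1:ℝ) + ρ ≠ 0 := h1.ne'
  have hcne : 1 / (1 + ρ) ≠ 0 := one_div_ne_zero h1ne
  obtain ⟨x₀, hx₀⟩ : ∃ x, 0 < Q x := by
    by_contra h; push_neg at h
    have : ∑ a, Q a ≤ 0 := Finset.sum_nonpos fun a _ => h a
    rw [hQ1] at this; linarith
  obtain ⟨y₀, hy₀⟩ : ∃ y, 0 < W x₀ y := by
    by_contra h; push_neg at h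
    have : ∑ y, W x₀ y ≤ 0 := Finset.sum_nonpos fun a _ => h a
    rw [hW1 x₀] at this; linarith
  have hxy₀ : 0 < Q x₀ * W x₀ y₀ := mul_pos hx₀ hy₀
  set A : Y → ℝ := fun y => ∑ x, Q x * W x y ^ (1 / (1 + ρ)) with hA
  set D : ℝ := ∑ b, A b ^ (1 + ρ) with hD
  have hfR : ∀ y, fRho W Q ρ y = A y ^ (1 + ρ) / D := fun y => rfl
  have hAnn : ∀ y, 0 ≤ A y := fun y =>
    Finset.sum_nonneg fun x _ => mul_nonneg (hQ0 x) (Real.rpow_nonneg (hW0 x y) _)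
  have hApos : ∀ x y, 0 < Q x * W x y → 0 < A y := by
    intro x y hxy
    obtain ⟨hq, hw⟩ := pos_pos (hQ0 x) (hW0 x y) hxy
    exact Finset.sum_pos'
      (fun a _ => mul_nonneg (hQ0 a) (Real.rpow_nonneg (hW0 a y) _))
      ⟨x, Finset.mem_univ x, mul_pos hq (Real.rpow_pos_of_pos hw _)⟩
  have hDpos : 0 < D :=
    Finset.sum_pos' (fun b _ => Real.rpow_nonneg (hAnn b) _)
      ⟨y₀, Finset.mem_univ _, Real.rpow_pos_of_pos (hApos x₀ y₀ hxy₀) _⟩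
  have hfpos : ∀ x y, 0 < Q x * W x y → 0 < fRho W Q ρ y := fun x y h => by
    rw [hfR]; exact div_pos (Real.rpow_pos_of_pos (hApos x y h) _) hDpos
  have hlf : ∀ x y, 0 < Q x * W x y →
      Real.log (fRho W Q ρ y) = (1 + ρ) * Real.log (A y) - Real.log D := by
    intro x y h
    rw [hfR, Real.log_div (Real.rpow_pos_of_pos (hApos x y h) _).ne' hDpos.ne',
      Real.log_rpow (hApos x y h)]
  have hPpos : 0 < PStilde W Q := by
    have hterm : ∀ x y z : _, (0:ℝ) ≤
        (if 0 < Q x * W x y * (Q z * W z y) then Q x * W x y * Q z else 0) := by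
      intro x y z
      split_ifs with h
      · have h1 := pos_pos (mul_nonneg (hQ0 x) (hW0 x y))
          (mul_nonneg (hQ0 z) (hW0 z y)) h
        exact mul_nonneg h1.1.le (hQ0 z)
      · exact le_refl 0
    rw [PStilde]
    refine Finset.sum_pos' (fun x _ => Finset.sum_nonneg fun y _ =>
      Finset.sum_nonneg fun z _ => hterm x y z) ⟨x₀, Finset.mem_univ _, ?_⟩
    refine Finset.sum_pos' (fun y _ => Finset.sum_nonneg fun z _ => hterm x₀ y z)
      ⟨y₀, Finset.mem_univ _, ?_⟩
    refine Finset.sum_pos' (fun z _ => hterm x₀ y₀ z) ⟨x₀, Finset.mem_univ _, ?_⟩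
    rw [if_pos (mul_pos hxy₀ hxy₀)]
    exact mul_pos hxy₀ hx₀
  -- key factorization of the inner z-sum
  have key1 : ∀ (x : X) (y : Y) (u : ℝ),
      (∑ z, if 0 < Q x * W x y * (Q z * W z y) then
          Q x * W x y * Q z * Real.exp (u * Real.log (W x y / fRho W Q ρ y) +
            1 / (1 + ρ) * Real.log (W z y / W x y)) else 0)
      = Q x * W x y * Real.exp (u * Real.log (W x y / fRho W Q ρ y)
          - 1 / (1 + ρ) * Real.log (W x y)) * A y := by
    intro x y u
    rcases (mul_nonneg (hQ0 x) (hW0 x y)).eq_or_lt with h0 | hp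
    · simp [← h0]
    · obtain ⟨hq, hw⟩ := pos_pos (hQ0 x) (hW0 x y) hp
      rw [hA, Finset.mul_sum]
      refine Finset.sum_congr rfl fun z _ => ?_
      by_cases hz : 0 < Q z * W z y
      · obtain ⟨hqz, hwz⟩ := pos_pos (hQ0 z) (hW0 z y) hz
        rw [if_pos (mul_pos hp hz), Real.log_div hwz.ne' hw.ne',
          Real.rpow_def_of_pos hwz,
          show u * Real.log (W x y / fRho W Q ρ y) +
              1 / (1 + ρ) * (Real.log (W z y) - Real.log (W x y))
            = (u * Real.log (W x y / fRho W Q ρ y)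
                - 1 / (1 + ρ) * Real.log (W x y))
              + Real.log (W z y) * (1 / (1 + ρ)) by ring,
          Real.exp_add]
        ring
      · have hz0 : Q z * W z y = 0 :=
          le_antisymm (not_lt.mp hz) (mul_nonneg (hQ0 z) (hW0 z y))
        rw [if_neg (by rw [hz0, mul_zero]; exact lt_irrefl 0)]
        rcases mul_eq_zero.mp hz0 with h | h
        · rw [h]; ring
        · rw [h, Real.zero_rpow hcne]; ring
  have keyhelper : ∀ q a b c d : ℝ, a + b = c + d →
      q * Real.exp a * Real.exp b = Real.exp c * (q * Real.exp d) := by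
    intro q a b c d h
    rw [mul_assoc, ← Real.exp_add, h, Real.exp_add]; ring
  have key2 : ∀ (x : X) (y : Y),
      Q x * W x y * Real.exp ((1 - ρ) / (1 + ρ) * Real.log (W x y / fRho W Q ρ y)
          - 1 / (1 + ρ) * Real.log (W x y)) * A y
      = D ^ (1 / (1 + ρ)) *
          (Q x * W x y * Real.exp (ρ / (1 + ρ) * Real.log (fRho W Q ρ y / W x y))) := by
    intro x y
    rcases (mul_nonneg (hQ0 x) (hW0 x y)).eq_or_lt with h0 | hp
    · rw [← h0]; ring
    · obtain ⟨hq, hw⟩ := pos_pos (hQ0 x) (hW0 x y) hp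
      have hf := hfpos x y hp
      rw [Real.log_div hw.ne' hf.ne', Real.log_div hf.ne' hw.ne',
        ← Real.exp_log (hApos x y hp), hlf x y hp, Real.rpow_def_of_pos hDpos]
      apply keyhelper
      field_simp
      ring
  -- the G function (for Lam)
  have hGd : HasDerivAt
      (fun t => ∑ x, ∑ y, Q x * W x y *
        Real.exp (t * Real.log (fRho W Q ρ y / W x y)))
      (∑ x, ∑ y, Q x * W x y *
        (Real.exp (ρ / (1 + ρ) * Real.log (fRho W Q ρ y / W x y)) *
          Real.log (fRho W Q ρ y / W x y)))
      (ρ / (1 + ρ)) := by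
    refine HasDerivAt.fun_sum fun x _ => HasDerivAt.fun_sum fun y _ => ?_
    exact ((hasDerivAt_mul_const _).exp).const_mul _
  have hGpos : ∀ t : ℝ, 0 < ∑ x, ∑ y, Q x * W x y *
      Real.exp (t * Real.log (fRho W Q ρ y / W x y)) := by
    intro t
    refine Finset.sum_pos' (fun x _ => Finset.sum_nonneg fun y _ =>
        mul_nonneg (mul_nonneg (hQ0 x) (hW0 x y)) (Real.exp_pos _).le)
      ⟨x₀, Finset.mem_univ _, ?_⟩
    exact Finset.sum_pos' (fun y _ =>
        mul_nonneg (mul_nonneg (hQ0 x₀) (hW0 x₀ y)) (Real.exp_pos _).le)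
      ⟨y₀, Finset.mem_univ _, mul_pos hxy₀ (Real.exp_pos _)⟩
  have he : (fun t => Lam W Q ρ t) = fun t => Real.log (∑ x, ∑ y, Q x * W x y *
      Real.exp (t * Real.log (fRho W Q ρ y / W x y))) := rfl
  have hder2 : deriv (fun t => Lam W Q ρ t) (ρ / (1 + ρ)) =
      (∑ x, ∑ y, Q x * W x y *
        (Real.exp (ρ / (1 + ρ) * Real.log (fRho W Q ρ y / W x y)) *
          Real.log (fRho W Q ρ y / W x y))) /
      (∑ x, ∑ y, Q x * W x y *
        Real.exp (ρ / (1 + ρ) * Real.log (fRho W Q ρ y / W x y))) := by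
    rw [he]
    exact (hGd.log (hGpos _).ne').deriv
  -- the F1 function (for Lam1 in the first variable)
  have hF1d : HasDerivAt
      (fun u => ∑ x, ∑ y, ∑ z, if 0 < Q x * W x y * (Q z * W z y) then
        Q x * W x y * Q z * Real.exp (u * Real.log (W x y / fRho W Q ρ y) +
          1 / (1 + ρ) * Real.log (W z y / W x y)) else 0)
      (∑ x, ∑ y, ∑ z, if 0 < Q x * W x y * (Q z * W z y) then
        Q x * W x y * Q z *
          (Real.exp ((1 - ρ) / (1 + ρ) * Real.log (W x y / fRho W Q ρ y) +
            1 / (1 + ρ) * Real.log (W z y / W x y)) *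
            Real.log (W x y / fRho W Q ρ y)) else 0)
      ((1 - ρ) / (1 + ρ)) := by
    refine HasDerivAt.fun_sum fun x _ => HasDerivAt.fun_sum fun y _ =>
      HasDerivAt.fun_sum fun z _ => ?_
    by_cases hcond : 0 < Q x * W x y * (Q z * W z y)
    · simp only [if_pos hcond]
      exact (((hasDerivAt_mul_const _).add_const _).exp).const_mul _
    · simp only [if_neg hcond]
      exact hasDerivAt_const _ _
  have hF1tn : ∀ (u : ℝ) (x : X) (y : Y) (z : X), (0:ℝ) ≤
      (if 0 < Q x * W x y * (Q z * W z y) then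
        Q x * W x y * Q z * Real.exp (u * Real.log (W x y / fRho W Q ρ y) +
          1 / (1 + ρ) * Real.log (W z y / W x y)) else 0) := by
    intro u x y z
    split_ifs with h
    · have h1 := pos_pos (mul_nonneg (hQ0 x) (hW0 x y))
        (mul_nonneg (hQ0 z) (hW0 z y)) h
      exact mul_nonneg (mul_nonneg h1.1.le (hQ0 z)) (Real.exp_pos _).le
    · exact le_refl 0
  have hF1pos : ∀ u : ℝ, 0 < ∑ x, ∑ y, ∑ z,
      if 0 < Q x * W x y * (Q z * W z y) then
        Q x * W x y * Q z * Real.exp (u * Real.log (W x y / fRho W Q ρ y) +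
          1 / (1 + ρ) * Real.log (W z y / W x y)) else 0 := by
    intro u
    refine Finset.sum_pos' (fun x _ => Finset.sum_nonneg fun y _ =>
      Finset.sum_nonneg fun z _ => hF1tn u x y z) ⟨x₀, Finset.mem_univ _, ?_⟩
    refine Finset.sum_pos' (fun y _ => Finset.sum_nonneg fun z _ => hF1tn u x₀ y z)
      ⟨y₀, Finset.mem_univ _, ?_⟩
    refine Finset.sum_pos' (fun z _ => hF1tn u x₀ y₀ z) ⟨x₀, Finset.mem_univ _, ?_⟩
    rw [if_pos (mul_pos hxy₀ hxy₀)]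
    exact mul_pos (mul_pos hxy₀ hx₀) (Real.exp_pos _)
  have hL1e : (fun v₁ => Lam1 W Q ρ (v₁, 1 / (1 + ρ))) =
      fun u => Real.log (∑ x, ∑ y, ∑ z,
        if 0 < Q x * W x y * (Q z * W z y) then
          Q x * W x y * Q z * Real.exp (u * Real.log (W x y / fRho W Q ρ y) +
            1 / (1 + ρ) * Real.log (W z y / W x y)) else 0) -
        Real.log (PStilde W Q) := by
    funext u
    show Real.log (_ / PStilde W Q) = _
    rw [Real.log_div (hF1pos u).ne' hPpos.ne']
  have hder1 : deriv (fun v₁ => Lam1 W Q ρ (v₁, 1 / (1 + ρ))) ((1 - ρ) / (1 + ρ)) =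
      (∑ x, ∑ y, ∑ z, if 0 < Q x * W x y * (Q z * W z y) then
        Q x * W x y * Q z *
          (Real.exp ((1 - ρ) / (1 + ρ) * Real.log (W x y / fRho W Q ρ y) +
            1 / (1 + ρ) * Real.log (W z y / W x y)) *
            Real.log (W x y / fRho W Q ρ y)) else 0) /
      (∑ x, ∑ y, ∑ z, if 0 < Q x * W x y * (Q z * W z y) then
        Q x * W x y * Q z *
          Real.exp ((1 - ρ) / (1 + ρ) * Real.log (W x y / fRho W Q ρ y) +
            1 / (1 + ρ) * Real.log (W z y / W x y)) else 0) := by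
    rw [hL1e]
    exact ((hF1d.log (hF1pos _).ne').sub_const _).deriv
  have hF1eq : (∑ x, ∑ y, ∑ z, if 0 < Q x * W x y * (Q z * W z y) then
        Q x * W x y * Q z *
          Real.exp ((1 - ρ) / (1 + ρ) * Real.log (W x y / fRho W Q ρ y) +
            1 / (1 + ρ) * Real.log (W z y / W x y)) else 0)
      = D ^ (1 / (1 + ρ)) * ∑ x, ∑ y, Q x * W x y *
          Real.exp (ρ / (1 + ρ) * Real.log (fRho W Q ρ y / W x y)) := by
    rw [Finset.mul_sum]
    refine Finset.sum_congr rfl fun x _ => ?_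
    rw [Finset.mul_sum]
    refine Finset.sum_congr rfl fun y _ => ?_
    rw [key1, key2]
  have hF1'eq : (∑ x, ∑ y, ∑ z, if 0 < Q x * W x y * (Q z * W z y) then
        Q x * W x y * Q z *
          (Real.exp ((1 - ρ) / (1 + ρ) * Real.log (W x y / fRho W Q ρ y) +
            1 / (1 + ρ) * Real.log (W z y / W x y)) *
            Real.log (W x y / fRho W Q ρ y)) else 0)
      = -(D ^ (1 / (1 + ρ))) * ∑ x, ∑ y, Q x * W x y *
          (Real.exp (ρ / (1 + ρ) * Real.log (fRho W Q ρ y / W x y)) *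
            Real.log (fRho W Q ρ y / W x y)) := by
    rw [Finset.mul_sum]
    refine Finset.sum_congr rfl fun x _ => ?_
    rw [Finset.mul_sum]
    refine Finset.sum_congr rfl fun y _ => ?_
    have hz : (∑ z, if 0 < Q x * W x y * (Q z * W z y) then
        Q x * W x y * Q z *
          (Real.exp ((1 - ρ) / (1 + ρ) * Real.log (W x y / fRho W Q ρ y) +
            1 / (1 + ρ) * Real.log (W z y / W x y)) *
            Real.log (W x y / fRho W Q ρ y)) else 0)
        = (∑ z, if 0 < Q x * W x y * (Q z * W z y) then
        Q x * W x y * Q z *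
          Real.exp ((1 - ρ) / (1 + ρ) * Real.log (W x y / fRho W Q ρ y) +
            1 / (1 + ρ) * Real.log (W z y / W x y)) else 0) *
          Real.log (W x y / fRho W Q ρ y) := by
      rw [Finset.sum_mul]
      refine Finset.sum_congr rfl fun z _ => ?_
      by_cases hcond : 0 < Q x * W x y * (Q z * W z y)
      · simp only [if_pos hcond]; ring
      · simp only [if_neg hcond, zero_mul]
    rw [hz, key1, key2]
    rcases (mul_nonneg (hQ0 x) (hW0 x y)).eq_or_lt with h0 | hp
    · rw [← h0]; ring
    · obtain ⟨hq, hw⟩ := pos_pos (hQ0 x) (hW0 x y) hp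
      have hlog : Real.log (W x y / fRho W Q ρ y)
          = -Real.log (fRho W Q ρ y / W x y) := by
        rw [← Real.log_inv, inv_div]
      rw [hlog]; ring
  have part1 : deriv (fun v₁ => Lam1 W Q ρ (v₁, 1 / (1 + ρ))) ((1 - ρ) / (1 + ρ)) =
      - deriv (fun t => Lam W Q ρ t) (ρ / (1 + ρ)) := by
    rw [hder1, hder2, hF1eq, hF1'eq, neg_mul, neg_div,
      mul_div_mul_left _ _ (Real.rpow_pos_of_pos hDpos (1 / (1 + ρ))).ne']
  -- part 2
  have keyhelper2 : ∀ q a b c d : ℝ, a + b = c + d →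
      q * Real.exp a * Real.exp b = q * Real.exp c * Real.exp d := by
    intro q a b c d h
    rw [mul_assoc, mul_assoc, ← Real.exp_add, ← Real.exp_add, h]
  have hF2d : HasDerivAt
      (fun u => ∑ x, ∑ y, ∑ z, if 0 < Q x * W x y * (Q z * W z y) then
        Q x * W x y * Q z *
          Real.exp ((1 - ρ) / (1 + ρ) * Real.log (W x y / fRho W Q ρ y) +
            u * Real.log (W z y / W x y)) else 0)
      (∑ x, ∑ y, ∑ z, if 0 < Q x * W x y * (Q z * W z y) then
        Q x * W x y * Q z *
          (Real.exp ((1 - ρ) / (1 + ρ) * Real.log (W x y / fRho W Q ρ y) +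
            1 / (1 + ρ) * Real.log (W z y / W x y)) *
            Real.log (W z y / W x y)) else 0)
      (1 / (1 + ρ)) := by
    refine HasDerivAt.fun_sum fun x _ => HasDerivAt.fun_sum fun y _ =>
      HasDerivAt.fun_sum fun z _ => ?_
    by_cases hcond : 0 < Q x * W x y * (Q z * W z y)
    · simp only [if_pos hcond]
      exact (((hasDerivAt_mul_const _).const_add _).exp).const_mul _
    · simp only [if_neg hcond]
      exact hasDerivAt_const _ _
  have hF2tn : ∀ (u : ℝ) (x : X) (y : Y) (z : X), (0:ℝ) ≤
      (if 0 < Q x * W x y * (Q z * W z y) then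
        Q x * W x y * Q z *
          Real.exp ((1 - ρ) / (1 + ρ) * Real.log (W x y / fRho W Q ρ y) +
            u * Real.log (W z y / W x y)) else 0) := by
    intro u x y z
    split_ifs with h
    · have h1 := pos_pos (mul_nonneg (hQ0 x) (hW0 x y))
        (mul_nonneg (hQ0 z) (hW0 z y)) h
      exact mul_nonneg (mul_nonneg h1.1.le (hQ0 z)) (Real.exp_pos _).le
    · exact le_refl 0
  have hF2pos : ∀ u : ℝ, 0 < ∑ x, ∑ y, ∑ z,
      if 0 < Q x * W x y * (Q z * W z y) then
        Q x * W x y * Q z *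
          Real.exp ((1 - ρ) / (1 + ρ) * Real.log (W x y / fRho W Q ρ y) +
            u * Real.log (W z y / W x y)) else 0 := by
    intro u
    refine Finset.sum_pos' (fun x _ => Finset.sum_nonneg fun y _ =>
      Finset.sum_nonneg fun z _ => hF2tn u x y z) ⟨x₀, Finset.mem_univ _, ?_⟩
    refine Finset.sum_pos' (fun y _ => Finset.sum_nonneg fun z _ => hF2tn u x₀ y z)
      ⟨y₀, Finset.mem_univ _, ?_⟩
    refine Finset.sum_pos' (fun z _ => hF2tn u x₀ y₀ z) ⟨x₀, Finset.mem_univ _, ?_⟩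
    rw [if_pos (mul_pos hxy₀ hxy₀)]
    exact mul_pos (mul_pos hxy₀ hx₀) (Real.exp_pos _)
  have hL2e : (fun v₂ => Lam1 W Q ρ ((1 - ρ) / (1 + ρ), v₂)) =
      fun u => Real.log (∑ x, ∑ y, ∑ z,
        if 0 < Q x * W x y * (Q z * W z y) then
          Q x * W x y * Q z *
            Real.exp ((1 - ρ) / (1 + ρ) * Real.log (W x y / fRho W Q ρ y) +
              u * Real.log (W z y / W x y)) else 0) -
        Real.log (PStilde W Q) := by
    funext u
    show Real.log (_ / PStilde W Q) = _
    rw [Real.log_div (hF2pos u).ne' hPpos.ne']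
  have hder3 : deriv (fun v₂ => Lam1 W Q ρ ((1 - ρ) / (1 + ρ), v₂)) (1 / (1 + ρ)) =
      (∑ x, ∑ y, ∑ z, if 0 < Q x * W x y * (Q z * W z y) then
        Q x * W x y * Q z *
          (Real.exp ((1 - ρ) / (1 + ρ) * Real.log (W x y / fRho W Q ρ y) +
            1 / (1 + ρ) * Real.log (W z y / W x y)) *
            Real.log (W z y / W x y)) else 0) /
      (∑ x, ∑ y, ∑ z, if 0 < Q x * W x y * (Q z * W z y) then
        Q x * W x y * Q z *
          Real.exp ((1 - ρ) / (1 + ρ) * Real.log (W x y / fRho W Q ρ y) +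
            1 / (1 + ρ) * Real.log (W z y / W x y)) else 0) := by
    rw [hL2e]
    exact ((hF2d.log (hF2pos _).ne').sub_const _).deriv
  -- pointwise antisymmetry
  have key3 : ∀ (x : X) (y : Y) (z : X),
      (if 0 < Q x * W x y * (Q z * W z y) then
        Q x * W x y * Q z *
          (Real.exp ((1 - ρ) / (1 + ρ) * Real.log (W x y / fRho W Q ρ y) +
            1 / (1 + ρ) * Real.log (W z y / W x y)) *
            Real.log (W z y / W x y)) else 0)
      + (if 0 < Q z * W z y * (Q x * W x y) then
        Q z * W z y * Q x *
          (Real.exp ((1 - ρ) / (1 + ρ) * Real.log (W z y / fRho W Q ρ y) +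
            1 / (1 + ρ) * Real.log (W x y / W z y)) *
            Real.log (W x y / W z y)) else 0) = 0 := by
    intro x y z
    by_cases hcond : 0 < Q x * W x y * (Q z * W z y)
    · have hcond' : 0 < Q z * W z y * (Q x * W x y) := by
        rw [mul_comm]; exact hcond
      rw [if_pos hcond, if_pos hcond']
      obtain ⟨hxyp, hzyp⟩ := pos_pos (mul_nonneg (hQ0 x) (hW0 x y))
        (mul_nonneg (hQ0 z) (hW0 z y)) hcond
      obtain ⟨hq, hw⟩ := pos_pos (hQ0 x) (hW0 x y) hxyp
      obtain ⟨hqz, hwz⟩ := pos_pos (hQ0 z) (hW0 z y) hzyp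
      have hf := hfpos x y hxyp
      have hlog : Real.log (W x y / W z y) = -Real.log (W z y / W x y) := by
        rw [← Real.log_inv, inv_div]
      have hM : Q x * W x y * Q z *
          Real.exp ((1 - ρ) / (1 + ρ) * Real.log (W x y / fRho W Q ρ y) +
            1 / (1 + ρ) * Real.log (W z y / W x y))
          = Q z * W z y * Q x *
          Real.exp ((1 - ρ) / (1 + ρ) * Real.log (W z y / fRho W Q ρ y) +
            1 / (1 + ρ) * Real.log (W x y / W z y)) := by
        rw [Real.log_div hw.ne' hf.ne', Real.log_div hwz.ne' hf.ne',
          Real.log_div hwz.ne' hw.ne', Real.log_div hw.ne' hwz.ne']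
        set lx := Real.log (W x y) with hlx
        set lz := Real.log (W z y) with hlz
        rw [show Q x * W x y * Q z = Q x * Q z * W x y by ring,
          show Q z * W z y * Q x = Q x * Q z * W z y by ring,
          ← Real.exp_log hw, ← Real.exp_log hwz]
        refine keyhelper2 _ _ _ _ _ ?_
        rw [← hlx, ← hlz]
        field_simp
        ring
      linear_combination Real.log (W z y / W x y) * hM +
        (Q z * W z y * Q x *
          Real.exp ((1 - ρ) / (1 + ρ) * Real.log (W z y / fRho W Q ρ y) +
            1 / (1 + ρ) * Real.log (W x y / W z y))) * hlog
    · have hcond' : ¬ 0 < Q z * W z y * (Q x * W x y) := by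
        rw [mul_comm]; exact hcond
      rw [if_neg hcond, if_neg hcond', add_zero]
  have tripswap : ∀ f : X → Y → X → ℝ,
      (∑ x, ∑ y, ∑ z, f x y z) = ∑ z, ∑ y, ∑ x, f x y z := by
    intro f
    calc (∑ x, ∑ y, ∑ z, f x y z) = ∑ y, ∑ x, ∑ z, f x y z := Finset.sum_comm
      _ = ∑ y, ∑ z, ∑ x, f x y z :=
          Finset.sum_congr rfl fun y _ => Finset.sum_comm
      _ = ∑ z, ∑ y, ∑ x, f x y z := Finset.sum_comm
  have hT0 : (∑ x, ∑ y, ∑ z, if 0 < Q x * W x y * (Q z * W z y) then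
        Q x * W x y * Q z *
          (Real.exp ((1 - ρ) / (1 + ρ) * Real.log (W x y / fRho W Q ρ y) +
            1 / (1 + ρ) * Real.log (W z y / W x y)) *
            Real.log (W z y / W x y)) else 0) = 0 := by
    have hdb : (∑ x, ∑ y, ∑ z, if 0 < Q x * W x y * (Q z * W z y) then
        Q x * W x y * Q z *
          (Real.exp ((1 - ρ) / (1 + ρ) * Real.log (W x y / fRho W Q ρ y) +
            1 / (1 + ρ) * Real.log (W z y / W x y)) *
            Real.log (W z y / W x y)) else 0)
        + (∑ x, ∑ y, ∑ z, if 0 < Q x * W x y * (Q z * W z y) then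
        Q x * W x y * Q z *
          (Real.exp ((1 - ρ) / (1 + ρ) * Real.log (W x y / fRho W Q ρ y) +
            1 / (1 + ρ) * Real.log (W z y / W x y)) *
            Real.log (W z y / W x y)) else 0) = 0 := by
      nth_rewrite 2 [tripswap]
      rw [← Finset.sum_add_distrib]
      refine Finset.sum_eq_zero fun x _ => ?_
      rw [← Finset.sum_add_distrib]
      refine Finset.sum_eq_zero fun y _ => ?_
      rw [← Finset.sum_add_distrib]
      exact Finset.sum_eq_zero fun z _ => key3 x y z
    linarith
  have part2 : deriv (fun v₂ => Lam1 W Q ρ ((1 - ρ) / (1 + ρ), v₂)) (1 / (1 + ρ)) = 0 := by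
    rw [hder3, hT0, zero_div]
  exact ⟨part1, part2⟩







lemma ErQ_antitone {X Y : Type*} [Fintype X] [Fintype Y]
    (W : X → Y → ℝ) (hW : IsChannel W) (Q : X → ℝ) (hQ : IsDist Q) :
    Antitone (fun a => ErQ W a Q) := by
  obtain ⟨hW0, hW1⟩ := hW
  obtain ⟨hQ0, hQ1⟩ := hQ
  obtain ⟨x₀, hx₀⟩ : ∃ x, 0 < Q x := by
    by_contra h; push_neg at h
    have : ∑ a, Q a ≤ 0 := Finset.sum_nonpos fun a _ => h a
    rw [hQ1] at this; linarith
  obtain ⟨y₀, hy₀⟩ : ∃ y, 0 < W x₀ y := by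
    by_contra h; push_neg at h
    have : ∑ y, W x₀ y ≤ 0 := Finset.sum_nonpos fun a _ => h a
    rw [hW1 x₀] at this; linarith
  have hQle1 : Q x₀ ≤ 1 := by
    rw [← hQ1]
    exact Finset.single_le_sum (fun a _ => hQ0 a) (Finset.mem_univ _)
  have hEo : ∀ ρ' ∈ Set.Icc (0:ℝ) 1,
      Eo W ρ' Q ≤ -Real.log (Q x₀ ^ (2:ℝ) * W x₀ y₀) := by
    intro ρ' hρ'
    obtain ⟨hρ0', hρ1'⟩ := hρ'
    have h1' : (0:ℝ) < 1 + ρ' := by linarith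
    have hT : Q x₀ ^ (2:ℝ) * W x₀ y₀ ≤
        ∑ y, (∑ x, Q x * W x y ^ (1 / (1 + ρ'))) ^ (1 + ρ') := by
      have s1 : Q x₀ ^ (2:ℝ) * W x₀ y₀ ≤ Q x₀ ^ (1 + ρ') * W x₀ y₀ :=
        mul_le_mul_of_nonneg_right
          (Real.rpow_le_rpow_of_exponent_ge hx₀ hQle1 (by linarith)) hy₀.le
      have s2 : Q x₀ ^ (1 + ρ') * W x₀ y₀
          = (Q x₀ * W x₀ y₀ ^ (1 / (1 + ρ'))) ^ (1 + ρ') := by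
        rw [Real.mul_rpow hx₀.le (Real.rpow_nonneg hy₀.le _),
          ← Real.rpow_mul hy₀.le, one_div_mul_cancel h1'.ne', Real.rpow_one]
      have s3 : (Q x₀ * W x₀ y₀ ^ (1 / (1 + ρ'))) ^ (1 + ρ')
          ≤ (∑ x, Q x * W x y₀ ^ (1 / (1 + ρ'))) ^ (1 + ρ') :=
        Real.rpow_le_rpow (mul_nonneg hx₀.le (Real.rpow_nonneg hy₀.le _))
          (Finset.single_le_sum
            (fun x _ => mul_nonneg (hQ0 x) (Real.rpow_nonneg (hW0 x y₀) _))
            (Finset.mem_univ x₀)) h1'.le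
      have s4 : (∑ x, Q x * W x y₀ ^ (1 / (1 + ρ'))) ^ (1 + ρ')
          ≤ ∑ y, (∑ x, Q x * W x y ^ (1 / (1 + ρ'))) ^ (1 + ρ') :=
        Finset.single_le_sum (fun y _ => Real.rpow_nonneg
          (Finset.sum_nonneg fun x _ =>
            mul_nonneg (hQ0 x) (Real.rpow_nonneg (hW0 x y) _)) _)
          (Finset.mem_univ y₀)
      linarith
    have hpos0 : 0 < Q x₀ ^ (2:ℝ) * W x₀ y₀ :=
      mul_pos (Real.rpow_pos_of_pos hx₀ _) hy₀
    simp only [Eo]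
    exact neg_le_neg (Real.log_le_log hpos0 hT)
  intro a b hab
  simp only [ErQ]
  have hbdd : BddAbove ((fun ρ' => -ρ' * a + Eo W ρ' Q) '' Set.Icc (0:ℝ) 1) := by
    refine ⟨|a| + -Real.log (Q x₀ ^ (2:ℝ) * W x₀ y₀), ?_⟩
    rintro v ⟨ρ', hρ', rfl⟩
    have h1 := hEo ρ' hρ'
    have h2 : -ρ' * a ≤ |a| := by
      have h3 : -(ρ' * a) ≤ |ρ' * a| := neg_le_abs _
      rw [abs_mul, abs_of_nonneg hρ'.1] at h3
      nlinarith [abs_nonneg a, hρ'.2, hρ'.1]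
    simp only
    linarith
  refine csSup_le ⟨_, ⟨0, ⟨le_refl 0, zero_le_one⟩, rfl⟩⟩ ?_
  rintro v ⟨ρ', hρ', rfl⟩
  have step : -ρ' * b + Eo W ρ' Q ≤ -ρ' * a + Eo W ρ' Q := by
    have := hρ'.1
    nlinarith
  exact step.trans (le_csSup hbdd ⟨ρ', hρ', rfl⟩)

lemma deriv_ErQ_nonpos {X Y : Type*} [Fintype X] [Fintype Y]
    (W : X → Y → ℝ) (hW : IsChannel W) (Q : X → ℝ) (hQ : IsDist Q) (r : ℝ) :
    deriv (fun a => ErQ W a Q) r ≤ 0 := by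
  have hanti := ErQ_antitone W hW Q hQ
  by_cases hd : DifferentiableAt ℝ (fun a => ErQ W a Q) r
  · have h := hd.hasDerivAt
    rw [hasDerivAt_iff_tendsto_slope] at h
    have hsub : Set.Ioi r ⊆ {r}ᶜ := fun x hx => ne_of_gt hx
    have h' := h.mono_left (nhdsWithin_mono r hsub)
    refine le_of_tendsto h' ?_
    filter_upwards [self_mem_nhdsWithin] with x hx
    have hxr : r < x := hx
    rw [slope_def_field]
    exact div_nonpos_of_nonpos_of_nonneg
      (sub_nonpos.mpr (hanti hxr.le)) (sub_nonneg.mpr hxr.le)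
  · rw [deriv_zero_of_not_differentiableAt hd]


/-- The gradient of `Λ_{1,ρ}` at `ṽ = ((1-ρ)/(1+ρ), 1/(1+ρ))` equals
`(-Λ'_ρ(ρ/(1+ρ)), 0)`. -/
theorem statement14 {X Y : Type*} [Fintype X] [Fintype Y] [Nonempty X] [Nonempty Y]
    (W : X → Y → ℝ) (hW : IsChannel W) (hcr : Rcr W < Capacity W)
    (Q : X → ℝ) (hQ : IsDist Q)
    (hEr : ∃ R : ℝ, Rinf W < R ∧ 0 < ErQ W R Q)
    (r : ℝ) (hr1 : RcrQ W Q < r) (hr2 : r < MI W Q)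
    (ρ : ℝ) (hρ : ρ = - deriv (fun a => ErQ W a Q) r) :
    deriv (fun v₁ => Lam1 W Q ρ (v₁, 1 / (1 + ρ))) ((1 - ρ) / (1 + ρ)) =
        - deriv (fun t => Lam W Q ρ t) (ρ / (1 + ρ)) ∧
      deriv (fun v₂ => Lam1 W Q ρ ((1 - ρ) / (1 + ρ), v₂)) (1 / (1 + ρ)) = 0 := by
  have hd := deriv_ErQ_nonpos W hW Q hQ r
  exact grad_main W hW Q hQ ρ (by rw [hρ]; linarith)

end RCB
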